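/- arXiv:1704.03190 — 7 statements merged into one kernel-verified Lean document; each statement's English description precedes it below -/
import Mathlib

section
/- Rodrigues' formula: for every nonzero p ∈ ℝ³, setting θ = ‖p‖₂, one has exp(p̂) = I₃ + (sin θ / θ)·p̂ + ((1 − cos θ)/θ²)·p̂². -/
open Matrix Real

noncomputable section

/-- The skew-symmetric "hat" matrix of a vector in ℝ³. -/
def hatm (p : Fin 3 → ℝ) : Matrix (Fin 3) (Fin 3) ℝ :=
  !![0, -p 2, p 1; p 2, 0, -p 0; -p 1, p 0, 0]

/-- The Euclidean (ℓ²) norm on ℝ³. -/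
def norm2 (p : Fin 3 → ℝ) : ℝ := Real.sqrt (∑ i, p i ^ 2)

lemma norm2_sq (p : Fin 3 → ℝ) : norm2 p ^ 2 = ∑ i, p i ^ 2 := by
  rw [norm2, sq_sqrt]
  positivity

lemma norm2_pos (p : Fin 3 → ℝ) (hp : p ≠ 0) : 0 < norm2 p := by
  rw [norm2]
  apply Real.sqrt_pos.2
  rcases Function.ne_iff.1 hp with ⟨i, hi⟩
  have : 0 < p i ^ 2 := pow_two_pos_of_ne_zero hi
  calc (0:ℝ) < p i ^ 2 := this
    _ ≤ ∑ j, p j ^ 2 := Finset.single_le_sum (f := fun j => p j ^ 2)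
        (fun j _ => by positivity) (Finset.mem_univ i)

lemma hatm_cube (p : Fin 3 → ℝ) : hatm p ^ 3 = (-(norm2 p ^ 2)) • hatm p := by
  rw [norm2_sq, Fin.sum_univ_three]
  ext i j
  fin_cases i <;> fin_cases j <;>
    simp [hatm, pow_succ, Matrix.mul_apply, Fin.sum_univ_three] <;> ring

lemma hatm_pow_odd (p : Fin 3 → ℝ) (k : ℕ) :
    hatm p ^ (2 * k + 1) = ((-1 : ℝ) ^ k * norm2 p ^ (2 * k)) • hatm p := by
  induction k with
  | zero => simp
  | succ k ih =>
    have e : 2 * (k + 1) + 1 = (2 * k + 1) + 2 := by ring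
    rw [e, pow_add, ih, Matrix.smul_mul]
    have h2 : hatm p * hatm p ^ 2 = hatm p ^ 3 := by
      rw [← pow_succ']
    rw [h2, hatm_cube, smul_smul]
    congr 1
    ring

lemma hatm_pow_even (p : Fin 3 → ℝ) (k : ℕ) :
    hatm p ^ (2 * k + 2) = ((-1 : ℝ) ^ k * norm2 p ^ (2 * k)) • hatm p ^ 2 := by
  have : 2 * k + 2 = (2 * k + 1) + 1 := by ring
  rw [this, pow_succ, hatm_pow_odd, Matrix.smul_mul, ← sq]

/-- Rodrigues' formula. -/
theorem rodrigues_formula (p : Fin 3 → ℝ) (hp : p ≠ 0) :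
    NormedSpace.exp (hatm p) =
      1 + (Real.sin (norm2 p) / norm2 p) • hatm p
        + ((1 - Real.cos (norm2 p)) / norm2 p ^ 2) • hatm p ^ 2 := by
  letI : SeminormedRing (Matrix (Fin 3) (Fin 3) ℝ) := Matrix.linftyOpSemiNormedRing
  letI : NormedRing (Matrix (Fin 3) (Fin 3) ℝ) := Matrix.linftyOpNormedRing
  letI : NormedAlgebra ℝ (Matrix (Fin 3) (Fin 3) ℝ) := Matrix.linftyOpNormedAlgebra
  set θ := norm2 p with hθdef
  have hθ : 0 < θ := norm2_pos p hp
  have hθ' : θ ≠ 0 := ne_of_gt hθ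
  rw [NormedSpace.exp_eq_tsum (𝕂 := ℝ)]
  refine HasSum.tsum_eq ?_
  have hodd : HasSum (fun k : ℕ => ((Nat.factorial (2 * k + 1) : ℝ)⁻¹) • hatm p ^ (2 * k + 1))
      ((Real.sin θ / θ) • hatm p) := by
    have := ((Real.hasSum_sin θ).div_const θ).smul_const (hatm p)
    convert this using 2 with k
    rw [hatm_pow_odd, smul_smul]
    congr 1
    field_simp
    ring
  have heven : HasSum (fun k : ℕ => ((Nat.factorial (2 * k) : ℝ)⁻¹) • hatm p ^ (2 * k))
      (1 + ((1 - Real.cos θ) / θ ^ 2) • hatm p ^ 2) := by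
    have hc : HasSum (fun k : ℕ => (-1 : ℝ) ^ (k + 1) * θ ^ (2 * (k + 1)) / (Nat.factorial (2 * (k + 1)) : ℝ))
        (Real.cos θ - 1) := by
      have h := (Real.hasSum_cos θ)
      have := (hasSum_nat_add_iff' (f := fun n : ℕ => (-1 : ℝ) ^ n * θ ^ (2 * n) / (Nat.factorial (2 * n) : ℝ))
        1).2 h
      simpa using this
    have hc2 : HasSum (fun k : ℕ =>
        ((-((-1 : ℝ) ^ (k + 1) * θ ^ (2 * (k + 1)) / (Nat.factorial (2 * (k + 1)) : ℝ))) / θ ^ 2) • hatm p ^ 2)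
        (((1 - Real.cos θ) / θ ^ 2) • hatm p ^ 2) := by
      have := ((hc.neg).div_const (θ ^ 2)).smul_const (hatm p ^ 2)
      simpa [neg_sub] using this
    have key : HasSum (fun k : ℕ => ((Nat.factorial (2 * (k + 1)) : ℝ)⁻¹) • hatm p ^ (2 * (k + 1)))
        (((1 - Real.cos θ) / θ ^ 2) • hatm p ^ 2) := by
      convert hc2 using 2 with k
      have : 2 * (k + 1) = 2 * k + 2 := by ring
      rw [this, hatm_pow_even, smul_smul]
      congr 1
      have h2 : (2 * k + 2) = 2 * (k + 1) := by ring
      rw [h2]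
      field_simp
      ring
    have key' := HasSum.zero_add (f := fun k : ℕ =>
        ((Nat.factorial (2 * k) : ℝ)⁻¹) • hatm p ^ (2 * k)) (by simpa using key)
    simpa using key'
  have h := HasSum.even_add_odd
    (f := fun n : ℕ => ((Nat.factorial n : ℝ))⁻¹ • hatm p ^ n) heven hodd
  convert h using 1
  · rfl
  abel
end
end

section
/- The exponential map from 𝔰𝔬(3) to SO(3) is surjective: for every R ∈ SO(3) there exists a skew-symmetric matrix A ∈ ℝ^{3×3} (i.e., Aᵀ = −A) such that exp(A) = R. -/
open Matrix Real
set_option maxHeartbeats 1000000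

noncomputable section

/-- The ℝ-algebra homomorphism from ℂ × ℝ to 3×3 real matrices, sending
`(a + b i, c)` to the block matrix `!![a, -b, 0; b, a, 0; 0, 0, c]`. -/
def rotHom : ℂ × ℝ →ₐ[ℝ] Matrix (Fin 3) (Fin 3) ℝ where
  toFun p := !![p.1.re, -p.1.im, 0; p.1.im, p.1.re, 0; 0, 0, p.2]
  map_one' := by
    ext i j; fin_cases i <;> fin_cases j <;>
      simp [Matrix.one_apply, Matrix.vecHead, Matrix.vecTail]
  map_mul' p q := by
    ext i j
    fin_cases i <;> fin_cases j <;>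
      simp [Matrix.mul_apply, Fin.sum_univ_three, Complex.mul_re, Complex.mul_im,
        Matrix.vecHead, Matrix.vecTail] <;> ring
  map_zero' := by
    ext i j; fin_cases i <;> fin_cases j <;> simp [Matrix.vecHead, Matrix.vecTail]
  map_add' p q := by
    ext i j; fin_cases i <;> fin_cases j <;> simp [Matrix.vecHead, Matrix.vecTail] <;> ring
  commutes' r := by
    ext i j
    fin_cases i <;> fin_cases j <;>
      simp [Matrix.algebraMap_matrix_apply, Matrix.vecHead, Matrix.vecTail]

lemma exp_rotHom (x : ℂ × ℝ) :
    NormedSpace.exp (rotHom x) = rotHom (NormedSpace.exp x) := by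
  letI : SeminormedRing (Matrix (Fin 3) (Fin 3) ℝ) := Matrix.linftyOpSemiNormedRing
  letI : NormedRing (Matrix (Fin 3) (Fin 3) ℝ) := Matrix.linftyOpNormedRing
  letI : NormedAlgebra ℝ (Matrix (Fin 3) (Fin 3) ℝ) := Matrix.linftyOpNormedAlgebra
  exact (NormedSpace.map_exp rotHom.toRingHom
    (rotHom.toLinearMap.continuous_of_finiteDimensional) x).symm

lemma exp_prod_rot (θ : ℝ) :
    NormedSpace.exp (((θ : ℂ) * Complex.I, (0:ℝ)) : ℂ × ℝ)
      = (Complex.exp ((θ:ℂ) * Complex.I), 1) := by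
  apply Prod.ext
  · rw [Prod.fst_exp, ← Complex.exp_eq_exp_ℂ]
  · rw [Prod.snd_exp]; exact NormedSpace.exp_zero

/-- the exponential map from 𝔰𝔬(3) to SO(3) is surjective. -/
theorem exp_so3_surjective (R : Matrix (Fin 3) (Fin 3) ℝ)
    (hR : R * Rᵀ = 1) (hdet : R.det = 1) :
    ∃ A : Matrix (Fin 3) (Fin 3) ℝ, Aᵀ = -A ∧ NormedSpace.exp A = R := by
  classical
  -- Step 1: an eigenvector with eigenvalue 1
  have hdet0 : (R - 1).det = 0 := by
    have h1 : (R - 1) * Rᵀ = -(R - 1)ᵀ := by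
      rw [sub_mul, hR, Matrix.one_mul, Matrix.transpose_sub, Matrix.transpose_one, neg_sub]
    have h2 := congrArg Matrix.det h1
    rw [Matrix.det_mul, Matrix.det_transpose, hdet, mul_one, Matrix.det_neg,
      Matrix.det_transpose] at h2
    simp [Fintype.card_fin] at h2
    linarith
  obtain ⟨v, hv0, hv⟩ := Matrix.exists_mulVec_eq_zero_iff.mpr hdet0
  have hRv : R.mulVec v = v := by
    rwa [Matrix.sub_mulVec, Matrix.one_mulVec, sub_eq_zero] at hv
  -- Step 2: orthonormal basis whose third vector is the normalized eigenvector
  have hbasis : ∃ b : OrthonormalBasis (Fin 3) ℝ (EuclideanSpace ℝ (Fin 3)),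
      ∃ c : ℝ, c ≠ 0 ∧ (∀ i, (b 2 : EuclideanSpace ℝ (Fin 3)) i = c * v i) := by
    set w : EuclideanSpace ℝ (Fin 3) := (WithLp.equiv 2 (Fin 3 → ℝ)).symm v with hw
    have hwne : w ≠ 0 := by simpa [hw] using hv0
    have hnw : ‖w‖ ≠ 0 := norm_ne_zero_iff.mpr hwne
    set u : EuclideanSpace ℝ (Fin 3) := ‖w‖⁻¹ • w with hu
    have hun : ‖u‖ = 1 := by
      rw [hu, norm_smul]
      simp [abs_of_nonneg (norm_nonneg w), inv_mul_cancel₀ hnw]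
    have horth : Orthonormal ℝ (({2} : Set (Fin 3)).restrict (fun _ : Fin 3 => u)) := by
      constructor
      · intro i; exact hun
      · intro i j hij
        exfalso
        apply hij
        have hi := i.2; have hj := j.2
        simp only [Set.mem_singleton_iff] at hi hj
        exact Subtype.ext (hi.trans hj.symm)
    obtain ⟨b, hb⟩ := horth.exists_orthonormalBasis_extension_of_card_eq (by simp)
    refine ⟨b, ‖w‖⁻¹, inv_ne_zero hnw, fun i => ?_⟩
    rw [hb 2 rfl]
    simp [hu, hw]
  obtain ⟨b, c, hc0, hbc⟩ := hbasis
  -- Step 3: the change-of-basis matrix P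
  set P : Matrix (Fin 3) (Fin 3) ℝ :=
    Matrix.of (fun i j => (b j : EuclideanSpace ℝ (Fin 3)) i) with hP
  clear_value P
  have hPtP : Pᵀ * P = 1 := by
    ext i j
    have h := orthonormal_iff_ite.mp b.orthonormal i j
    rw [PiLp.inner_apply] at h
    simp only [RCLike.inner_apply, starRingEnd_apply, star_trivial] at h
    simp [hP, Matrix.mul_apply, Matrix.one_apply]
    rw [← h]
    exact Finset.sum_congr rfl (fun _ _ => mul_comm _ _)
  have hPPt : P * Pᵀ = 1 := mul_eq_one_comm.mp hPtP
  -- Step 4: the conjugated matrix S = Pᵀ R P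
  set S : Matrix (Fin 3) (Fin 3) ℝ := Pᵀ * R * P with hS
  clear_value S
  have hu2 : R.mulVec (fun k => (b 2 : EuclideanSpace ℝ (Fin 3)) k)
      = fun k => (b 2 : EuclideanSpace ℝ (Fin 3)) k := by
    have hfun : (fun k => (b 2 : EuclideanSpace ℝ (Fin 3)) k) = c • v := by
      funext k; simp [hbc k]
    rw [hfun, Matrix.mulVec_smul, hRv]
  have hRP : ∀ i, (R * P) i 2 = P i 2 := by
    intro i
    have h1 : (R * P) i 2 = R.mulVec (fun k => (b 2 : EuclideanSpace ℝ (Fin 3)) k) i := by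
      simp [Matrix.mul_apply, Matrix.mulVec, dotProduct, hP]
    rw [h1, hu2]
    simp [hP]
  have hScol : ∀ i, S i 2 = (1 : Matrix (Fin 3) (Fin 3) ℝ) i 2 := by
    intro i
    have e1 : S i 2 = ∑ j, P j i * (R * P) j 2 := by
      rw [hS, Matrix.mul_assoc]
      simp [Matrix.mul_apply]
    rw [e1]
    calc ∑ j, P j i * (R * P) j 2 = ∑ j, P j i * P j 2 :=
          Finset.sum_congr rfl (fun j _ => by rw [hRP j])
      _ = (Pᵀ * P) i 2 := by simp [Matrix.mul_apply]
      _ = (1 : Matrix (Fin 3) (Fin 3) ℝ) i 2 := by rw [hPtP]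
  have hSSt : S * Sᵀ = 1 := by
    have e : S * Sᵀ = Pᵀ * (R * ((P * Pᵀ) * (Rᵀ * P))) := by
      simp [hS, Matrix.transpose_mul, Matrix.transpose_transpose, Matrix.mul_assoc]
    rw [e, hPPt, Matrix.one_mul, ← Matrix.mul_assoc R, hR, Matrix.one_mul, hPtP]
  have hStS : Sᵀ * S = 1 := mul_eq_one_comm.mp hSSt
  have hSrow : ∀ j, S 2 j = (1 : Matrix (Fin 3) (Fin 3) ℝ) 2 j := by
    intro j
    have e : (Sᵀ * S) 2 j = S 2 j := by
      calc (Sᵀ * S) 2 j = ∑ k, S k 2 * S k j := by simp [Matrix.mul_apply]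
        _ = ∑ k, (if k = 2 then (1:ℝ) else 0) * S k j :=
            Finset.sum_congr rfl (fun k _ => by rw [hScol k, Matrix.one_apply])
        _ = S 2 j := by simp
    rw [hStS] at e
    exact e.symm
  -- Step 5: entries of S
  have hz02 : S 0 2 = 0 := by simpa using hScol 0
  have hz12 : S 1 2 = 0 := by simpa using hScol 1
  have hz20 : S 2 0 = 0 := by simpa using hSrow 0
  have hz21 : S 2 1 = 0 := by simpa using hSrow 1
  have h22 : S 2 2 = 1 := by simpa using hSrow 2
  have E : ∀ i j, (S * Sᵀ) i j = (1 : Matrix (Fin 3) (Fin 3) ℝ) i j := by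
    intro i j; rw [hSSt]
  have r1 : S 0 0 * S 0 0 + S 0 1 * S 0 1 = 1 := by
    have := E 0 0
    simp [Matrix.mul_apply, Fin.sum_univ_three, hz02, Matrix.one_apply] at this
    linarith
  have r2 : S 1 0 * S 1 0 + S 1 1 * S 1 1 = 1 := by
    have := E 1 1
    simp [Matrix.mul_apply, Fin.sum_univ_three, hz12, Matrix.one_apply] at this
    linarith
  have r3 : S 0 0 * S 1 0 + S 0 1 * S 1 1 = 0 := by
    have := E 0 1
    simp [Matrix.mul_apply, Fin.sum_univ_three, hz02, hz12, Matrix.one_apply] at this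
    linarith
  have hdetS : S 0 0 * S 1 1 - S 0 1 * S 1 0 = 1 := by
    have hd : S.det = 1 := by
      have hPP : P.det * P.det = 1 := by
        have := congrArg Matrix.det hPtP
        rwa [Matrix.det_mul, Matrix.det_transpose, Matrix.det_one] at this
      have : S.det = Pᵀ.det * R.det * P.det := by rw [hS, Matrix.det_mul, Matrix.det_mul]
      rw [this, Matrix.det_transpose, hdet]
      nlinarith [hPP]
    rw [Matrix.det_fin_three] at hd
    rw [hz02, hz12, hz20, hz21, h22] at hd
    ring_nf at hd ⊢
    linarith
  have key : (S 0 1 + S 1 0) ^ 2 + (S 1 1 - S 0 0) ^ 2 = 0 := by linear_combination r1 + r2 - 2 * hdetS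
  have hb' : S 0 1 = - S 1 0 := by nlinarith [sq_nonneg (S 0 1 + S 1 0), sq_nonneg (S 1 1 - S 0 0)]
  have hd' : S 1 1 = S 0 0 := by nlinarith [sq_nonneg (S 0 1 + S 1 0), sq_nonneg (S 1 1 - S 0 0)]
  -- Step 6: the angle
  have hac : S 0 0 ^ 2 + S 1 0 ^ 2 = 1 := by nlinarith [r1, hb']
  set z : ℂ := (S 0 0 : ℂ) + (S 1 0 : ℂ) * Complex.I with hz
  have hz0 : z ≠ 0 := by
    intro h
    have hre : z.re = S 0 0 := by simp [hz]
    have him : z.im = S 1 0 := by simp [hz]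
    rw [h] at hre him
    simp at hre him
    nlinarith [hac]
  have habs : ‖z‖ = 1 := by
    rw [hz, Complex.norm_def, Complex.normSq_add_mul_I]
    rw [show S 0 0 ^ 2 + S 1 0 ^ 2 = 1 from hac]
    exact Real.sqrt_one
  set θ : ℝ := Complex.arg z with hθ
  have hcos : Real.cos θ = S 0 0 := by
    rw [hθ, Complex.cos_arg hz0, habs]
    simp [hz]
  have hsin : Real.sin θ = S 1 0 := by
    rw [hθ, Complex.sin_arg, habs]
    simp [hz]
  -- Step 7: S equals the canonical rotation
  have hSeq : S = rotHom (Complex.exp ((θ:ℂ) * Complex.I), 1) := by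
    ext i j
    fin_cases i <;> fin_cases j <;>
      simp [rotHom, Complex.exp_re, Complex.exp_im, Matrix.vecHead, Matrix.vecTail,
        hcos, hsin, hz02, hz12, hz20, hz21, h22, hb', hd']
  -- Step 8: assemble
  refine ⟨P * rotHom ((θ:ℂ) * Complex.I, 0) * Pᵀ, ?_, ?_⟩
  · have hskew : (rotHom ((θ:ℂ) * Complex.I, 0))ᵀ = -(rotHom ((θ:ℂ) * Complex.I, 0)) := by
      ext i j
      fin_cases i <;> fin_cases j <;>
        simp [rotHom, Matrix.vecHead, Matrix.vecTail]
    calc (P * rotHom ((θ:ℂ) * Complex.I, 0) * Pᵀ)ᵀ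
        = P * (rotHom ((θ:ℂ) * Complex.I, 0))ᵀ * Pᵀ := by
          rw [Matrix.transpose_mul, Matrix.transpose_mul, Matrix.transpose_transpose,
            Matrix.mul_assoc]
      _ = -(P * rotHom ((θ:ℂ) * Complex.I, 0) * Pᵀ) := by
          rw [hskew]; simp [Matrix.mul_assoc]
  · have hPinv : P⁻¹ = Pᵀ := Matrix.inv_eq_left_inv hPtP
    have hUnit : IsUnit P := ⟨⟨P, Pᵀ, hPPt, hPtP⟩, rfl⟩
    have step1 : NormedSpace.exp (P * rotHom ((θ:ℂ) * Complex.I, 0) * Pᵀ)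
        = P * NormedSpace.exp (rotHom ((θ:ℂ) * Complex.I, 0)) * Pᵀ := by
      rw [← hPinv]
      exact Matrix.exp_conj P _ hUnit
    rw [step1, exp_rotHom, exp_prod_rot, ← hSeq, hS]
    have : P * (Pᵀ * R * P) * Pᵀ = (P * Pᵀ) * R * (P * Pᵀ) := by
      simp [Matrix.mul_assoc]
    rw [this, hPPt, Matrix.one_mul, Matrix.mul_one]
end
end

section
/- The function c(θ) = sinc(θ)/sinc²(θ/2) is concave on the interval [0, π], takes values in [0, 1] on [0, π], satisfies c(0) = 1 and c(π) = 0, and is strictly positive on [0, π). -/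
open Matrix Real

noncomputable section

/-- The unnormalized sinc function: α · sinc α = sin α, sinc 0 = 1. -/
def sinc (α : ℝ) : ℝ := if α = 0 then 1 else Real.sin α / α

/-- c(θ) = sinc(θ)/sinc²(θ/2). -/
def cfun (θ : ℝ) : ℝ := _root_.sinc θ / _root_.sinc (θ / 2) ^ 2

def gfun (θ : ℝ) : ℝ := θ * Real.cos (θ/2) / (2 * Real.sin (θ/2))
def g1 (θ : ℝ) : ℝ := (Real.sin θ - θ) / (4 * Real.sin (θ/2)^2)

lemma sin_two_half (θ : ℝ) : Real.sin θ = 2 * Real.sin (θ/2) * Real.cos (θ/2) := by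
  have := Real.sin_two_mul (θ/2)
  rw [show 2 * (θ/2) = θ by ring] at this
  linarith

lemma cos_two_half (θ : ℝ) : Real.cos θ = 1 - 2 * Real.sin (θ/2)^2 := by
  have h1 := Real.cos_two_mul' (θ/2)
  rw [show 2 * (θ/2) = θ by ring] at h1
  have h2 := Real.sin_sq_add_cos_sq (θ/2)
  linarith

lemma cfun_eq_g {θ : ℝ} (h0 : θ ≠ 0) (hs : Real.sin (θ/2) ≠ 0) : cfun θ = gfun θ := by
  have h2 : θ/2 ≠ 0 := by simpa using h0
  unfold cfun gfun _root_.sinc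
  rw [if_neg h0, if_neg h2, sin_two_half θ]
  field_simp

lemma hasDerivAt_sin_half (θ : ℝ) :
    HasDerivAt (fun x => Real.sin (x/2)) (Real.cos (θ/2) * (1/2)) θ := by
  have h1 : HasDerivAt (fun x : ℝ => x/2) (1/2) θ := (hasDerivAt_id θ).div_const 2
  exact (Real.hasDerivAt_sin (θ/2)).comp θ h1

lemma hasDerivAt_cos_half (θ : ℝ) :
    HasDerivAt (fun x => Real.cos (x/2)) (-Real.sin (θ/2) * (1/2)) θ := by
  have h1 : HasDerivAt (fun x : ℝ => x/2) (1/2) θ := (hasDerivAt_id θ).div_const 2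
  exact (Real.hasDerivAt_cos (θ/2)).comp θ h1

lemma hasDerivAt_g {θ : ℝ} (hs : Real.sin (θ/2) ≠ 0) : HasDerivAt gfun (g1 θ) θ := by
  have hnum : HasDerivAt (fun x => x * Real.cos (x/2))
      (1 * Real.cos (θ/2) + θ * (-Real.sin (θ/2) * (1/2))) θ :=
    (hasDerivAt_id θ).mul (hasDerivAt_cos_half θ)
  have hden : HasDerivAt (fun x => 2 * Real.sin (x/2)) (2 * (Real.cos (θ/2) * (1/2))) θ :=
    (hasDerivAt_sin_half θ).const_mul 2
  have h := hnum.div hden (by simpa using hs)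
  refine h.congr_deriv (Eq.symm ?_)
  rw [g1, sin_two_half θ]
  have h2 : Real.cos (θ/2)^2 = 1 - Real.sin (θ/2)^2 := Real.cos_sq' (θ/2)
  field_simp
  linear_combination (4 * θ) * h2

lemma hasDerivAt_g1 {θ : ℝ} (hs : Real.sin (θ/2) ≠ 0) :
    HasDerivAt g1
      (((Real.cos θ - 1) * (4 * Real.sin (θ/2)^2) - (Real.sin θ - θ) * (2 * Real.sin θ)) /
        (4 * Real.sin (θ/2)^2)^2) θ := by
  have hnum : HasDerivAt (fun x => Real.sin x - x) (Real.cos θ - 1) θ :=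
    (Real.hasDerivAt_sin θ).sub (hasDerivAt_id θ)
  have hden : HasDerivAt (fun x => 4 * Real.sin (x/2)^2)
      (4 * (2 * Real.sin (θ/2) ^ 1 * (Real.cos (θ/2) * (1/2)))) θ :=
    (((hasDerivAt_sin_half θ).pow 2)).const_mul 4
  have h := hnum.div hden (by positivity)
  refine h.congr_deriv (Eq.symm ?_)
  rw [sin_two_half θ]
  ring

lemma continuous_sinc : Continuous _root_.sinc := by
  rw [continuous_iff_continuousAt]
  intro x
  by_cases hx : x = 0
  · subst hx
    have h := hasDerivAt_iff_tendsto_slope.mp (Real.hasDerivAt_sin 0)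
    rw [Real.cos_zero] at h
    have heq : ∀ y ∈ ({(0:ℝ)}ᶜ : Set ℝ), slope Real.sin 0 y = _root_.sinc y := by
      intro y hy
      simp only [Set.mem_compl_iff, Set.mem_singleton_iff] at hy
      simp [slope, _root_.sinc, hy, Real.sin_zero, div_eq_inv_mul]
    have h2 : Filter.Tendsto _root_.sinc (nhdsWithin 0 {(0:ℝ)}ᶜ) (nhds 1) :=
      h.congr' (Filter.eventuallyEq_of_mem self_mem_nhdsWithin heq)
    have h3 : Filter.Tendsto _root_.sinc (pure (0:ℝ)) (nhds 1) := by
      simpa [_root_.sinc] using tendsto_pure_nhds _root_.sinc 0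
    have := h2.sup h3
    rw [nhdsNE_sup_pure] at this
    simpa [ContinuousAt, _root_.sinc] using this
  · have heq : ∀ᶠ y in nhds x, Real.sin y / y = _root_.sinc y := by
      filter_upwards [isOpen_compl_singleton.mem_nhds (by simpa using hx : x ∈ ({(0:ℝ)}ᶜ : Set ℝ))] with y hy
      simp only [Set.mem_compl_iff, Set.mem_singleton_iff] at hy
      simp [_root_.sinc, hy]
    exact (ContinuousAt.div (Real.continuous_sin.continuousAt) continuousAt_id hx).congr heq

lemma sinc_ne_zero {θ : ℝ} (h0 : 0 ≤ θ) (hπ : θ < 2 * Real.pi) : _root_.sinc (θ/2) ≠ 0 := by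
  rcases eq_or_lt_of_le h0 with h | h
  · simp [_root_.sinc, ← h]
  · have hs : 0 < Real.sin (θ/2) :=
      Real.sin_pos_of_pos_of_lt_pi (by linarith) (by linarith)
    have : _root_.sinc (θ/2) = Real.sin (θ/2) / (θ/2) := by rw [_root_.sinc, if_neg (by positivity)]
    rw [this]
    positivity

lemma key_ineq {θ : ℝ} (h0 : 0 < θ) (hπ : θ ≤ Real.pi) :
    θ * Real.cos (θ/2) ≤ 2 * Real.sin (θ/2) := by
  rcases eq_or_lt_of_le hπ with h | h
  · subst h
    rw [show Real.pi/2 = Real.pi/2 by rfl, Real.cos_pi_div_two, Real.sin_pi_div_two]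
    simp [Real.pi_pos.le]
  · have hc : 0 < Real.cos (θ/2) := Real.cos_pos_of_mem_Ioo ⟨by linarith [Real.pi_pos], by linarith⟩
    have ht := Real.lt_tan (x := θ/2) (by linarith) (by linarith)
    rw [Real.tan_eq_sin_div_cos] at ht
    rw [lt_div_iff₀ hc] at ht
    linarith

/-- properties of c(θ) = _root_.sinc(θ)/sinc²(θ/2) on [0, π]. -/
theorem cfun_properties :
    ConcaveOn ℝ (Set.Icc 0 Real.pi) cfun ∧
    (∀ θ ∈ Set.Icc (0 : ℝ) Real.pi, cfun θ ∈ Set.Icc (0 : ℝ) 1) ∧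
    cfun 0 = 1 ∧ cfun Real.pi = 0 ∧
    (∀ θ ∈ Set.Ico (0 : ℝ) Real.pi, 0 < cfun θ) := by
  have hπ := Real.pi_pos
  have hcont : ContinuousOn cfun (Set.Icc 0 Real.pi) := by
    apply ContinuousOn.div (_root_.continuous_sinc.continuousOn)
      ((_root_.continuous_sinc.comp (continuous_id.div_const 2)).continuousOn.pow 2)
    intro θ hθ
    have h2 : θ < 2 * Real.pi := by linarith [hθ.2, Real.pi_pos]
    exact pow_ne_zero 2 (_root_.sinc_ne_zero hθ.1 h2)
  have hval : ∀ θ : ℝ, 0 < θ → θ ≤ Real.pi → cfun θ = gfun θ := by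
    intro θ h1 h2
    exact cfun_eq_g h1.ne'
      (Real.sin_pos_of_pos_of_lt_pi (by linarith) (by linarith)).ne'
  have hconc : ConcaveOn ℝ (Set.Icc 0 Real.pi) cfun := by
    apply concaveOn_of_hasDerivWithinAt2_nonpos (f' := g1)
      (f'' := fun θ => ((Real.cos θ - 1) * (4 * Real.sin (θ/2)^2) -
        (Real.sin θ - θ) * (2 * Real.sin θ)) / (4 * Real.sin (θ/2)^2)^2)
      (convex_Icc 0 Real.pi) hcont
    · rw [interior_Icc]
      intro x hx
      have hs : 0 < Real.sin (x/2) :=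
        Real.sin_pos_of_pos_of_lt_pi (by linarith [hx.1]) (by linarith [hx.2])
      have hmem : Set.Ioo (0:ℝ) (2*Real.pi) ∈ nhds x :=
        Ioo_mem_nhds hx.1 (by linarith [hx.2])
      have heq : cfun =ᶠ[nhds x] gfun :=
        Filter.eventuallyEq_of_mem hmem (fun y hy => cfun_eq_g (ne_of_gt hy.1)
          (Real.sin_pos_of_pos_of_lt_pi (by linarith [hy.1]) (by linarith [hy.2])).ne')
      exact ((hasDerivAt_g hs.ne').congr_of_eventuallyEq heq).hasDerivWithinAt
    · rw [interior_Icc]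
      intro x hx
      have hs : 0 < Real.sin (x/2) :=
        Real.sin_pos_of_pos_of_lt_pi (by linarith [hx.1]) (by linarith [hx.2])
      exact (hasDerivAt_g1 hs.ne').hasDerivWithinAt
    · rw [interior_Icc]
      intro x hx
      have hs : 0 < Real.sin (x/2) :=
        Real.sin_pos_of_pos_of_lt_pi (by linarith [hx.1]) (by linarith [hx.2])
      apply div_nonpos_of_nonpos_of_nonneg _ (by positivity)
      rw [cos_two_half x, sin_two_half x]
      have hk := key_ineq hx.1 hx.2.le
      have hp := Real.sin_sq_add_cos_sq (x/2)
      nlinarith [mul_le_mul_of_nonneg_left hk (by positivity : (0:ℝ) ≤ 4*Real.sin (x/2)),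
        sq_nonneg (Real.sin (x/2)), sq_nonneg (Real.cos (x/2))]
  have hzero : cfun 0 = 1 := by simp [cfun, _root_.sinc]
  have hpi : cfun Real.pi = 0 := by
    rw [cfun, _root_.sinc, if_neg hπ.ne', Real.sin_pi]
    simp
  refine ⟨hconc, ?_, hzero, hpi, ?_⟩
  · intro θ hθ
    rcases eq_or_lt_of_le hθ.1 with h | h
    · rw [← h, hzero]; exact ⟨zero_le_one, le_refl 1⟩
    · have hs : 0 < Real.sin (θ/2) :=
        Real.sin_pos_of_pos_of_lt_pi (by linarith) (by linarith [hθ.2])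
      have hc : 0 ≤ Real.cos (θ/2) :=
        Real.cos_nonneg_of_mem_Icc ⟨by linarith, by linarith [hθ.2]⟩
      rw [hval θ h hθ.2, gfun]
      constructor
      · apply div_nonneg _ (by positivity)
        exact mul_nonneg h.le hc
      · rw [div_le_one (by positivity)]
        linarith [key_ineq h hθ.2]
  · intro θ hθ
    rcases eq_or_lt_of_le hθ.1 with h | h
    · rw [← h, hzero]; exact one_pos
    · have hs : 0 < Real.sin (θ/2) :=
        Real.sin_pos_of_pos_of_lt_pi (by linarith) (by linarith [hθ.2])
      have hc : 0 < Real.cos (θ/2) :=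
        Real.cos_pos_of_mem_Ioo ⟨by linarith, by linarith [hθ.2]⟩
      rw [hval θ h hθ.2.le, gfun]
      positivity
end
end

section
/- Eigenvalue lower bound for the symmetric part of the transition matrix: for every x ∈ ℝ³ with ‖x‖₂ ≤ π and every z ∈ ℝ³, zᵀ L_x z = zᵀ L¹_x z ≥ c(‖x‖₂)·‖z‖₂², where c(θ) = sinc(θ)/sinc²(θ/2). -/
open Matrix Real

noncomputable section

/-- The symmetric part L¹ₓ of the transition matrix (L¹₀ := I₃). -/
def L1mat (x : Fin 3 → ℝ) : Matrix (Fin 3) (Fin 3) ℝ :=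
  if x = 0 then 1 else
    cfun (norm2 x) • (1 : Matrix (Fin 3) (Fin 3) ℝ)
      + ((1 - cfun (norm2 x)) / norm2 x ^ 2) • vecMulVec x x

/-- The transition matrix Lₓ of the axis-angle kinematics (L₀ := I₃). -/
def Lmat (x : Fin 3 → ℝ) : Matrix (Fin 3) (Fin 3) ℝ :=
  if x = 0 then 1 else
    cfun (norm2 x) • (1 : Matrix (Fin 3) (Fin 3) ℝ)
      + ((1 - cfun (norm2 x)) / norm2 x ^ 2) • vecMulVec x x
      + (1 / 2 : ℝ) • hatm x

lemma half_cos_le_sin {a : ℝ} (h0 : 0 < a) (h1 : a ≤ Real.pi / 2) :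
    a * Real.cos a ≤ Real.sin a := by
  rcases lt_or_eq_of_le h1 with h | h
  · have hc : 0 < Real.cos a := Real.cos_pos_of_mem_Ioo ⟨by linarith [Real.pi_pos], h⟩
    have ht := Real.lt_tan h0 h
    rw [Real.tan_eq_sin_div_cos] at ht
    have := (lt_div_iff₀ hc).mp ht
    linarith
  · rw [h]; simp

lemma cfun_le_one {θ : ℝ} (h0 : 0 < θ) (h1 : θ ≤ Real.pi) : cfun θ ≤ 1 := by
  have hh0 : 0 < θ / 2 := by linarith
  have hh1 : θ / 2 ≤ Real.pi / 2 := by linarith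
  have hs : 0 < Real.sin (θ / 2) :=
    Real.sin_pos_of_pos_of_lt_pi hh0 (by linarith [Real.pi_pos])
  have hsinc : _root_.sinc (θ / 2) = Real.sin (θ / 2) / (θ / 2) := by
    simp [_root_.sinc, ne_of_gt hh0]
  have hsincθ : _root_.sinc θ = Real.sin θ / θ := by simp [_root_.sinc, ne_of_gt h0]
  have hsin2 : Real.sin θ = 2 * Real.sin (θ / 2) * Real.cos (θ / 2) := by
    have := Real.sin_two_mul (θ / 2)
    rw [show 2 * (θ / 2) = θ by ring] at this
    linarith
  have hden : 0 < _root_.sinc (θ / 2) ^ 2 := by rw [hsinc]; positivity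
  rw [cfun, div_le_one hden, hsincθ, hsinc, hsin2, div_pow]
  rw [div_le_div_iff₀ h0 (by positivity)]
  have hkey := half_cos_le_sin hh0 hh1
  nlinarith [mul_le_mul_of_nonneg_left hkey
    (by positivity : (0:ℝ) ≤ Real.sin (θ/2) * θ)]


/-- eigenvalue lower bound for the symmetric part of the
transition matrix. -/
theorem transition_matrix_quadratic_lower_bound (x z : Fin 3 → ℝ)
    (hx : norm2 x ≤ Real.pi) :
    z ⬝ᵥ (Lmat x).mulVec z = z ⬝ᵥ (L1mat x).mulVec z ∧
    cfun (norm2 x) * norm2 z ^ 2 ≤ z ⬝ᵥ (Lmat x).mulVec z := by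
  have hz2 : norm2 z ^ 2 = ∑ i, z i ^ 2 := Real.sq_sqrt (by positivity)
  by_cases hx0 : x = 0
  · subst hx0
    have hn : norm2 (0 : Fin 3 → ℝ) = 0 := by simp [norm2]
    have hc : cfun (0 : ℝ) = 1 := by simp [cfun, _root_.sinc]
    constructor
    · simp [Lmat, L1mat]
    · rw [hn, hc, hz2]
      have he : z ⬝ᵥ (Lmat 0).mulVec z = ∑ i, z i ^ 2 := by
        simp [Lmat, Matrix.one_mulVec, dotProduct, Fin.sum_univ_three]
        ring
      rw [he]; linarith
  · have hpos : 0 < ∑ i, x i ^ 2 := by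
      rcases Function.ne_iff.mp hx0 with ⟨i, hi⟩
      have hi' : x i ≠ 0 := by simpa using hi
      have : 0 < x i ^ 2 := by positivity
      have h2 : ∀ j ∈ Finset.univ, (0:ℝ) ≤ x j ^ 2 := fun j _ => sq_nonneg _
      exact Finset.sum_pos' h2 ⟨i, Finset.mem_univ i, this⟩
    have hθ : 0 < norm2 x := Real.sqrt_pos.mpr hpos
    have hθ2 : norm2 x ^ 2 = ∑ i, x i ^ 2 := Real.sq_sqrt hpos.le
    have hc1 : cfun (norm2 x) ≤ 1 := cfun_le_one hθ hx
    set c := cfun (norm2 x) with hcdef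
    have hexp : z ⬝ᵥ (Lmat x).mulVec z =
        c * (∑ i, z i ^ 2) + ((1 - c) / norm2 x ^ 2) * (∑ i, x i * z i) ^ 2 := by
      simp only [Lmat, if_neg hx0, dotProduct, Matrix.mulVec, Matrix.add_apply,
        Matrix.smul_apply, Matrix.one_apply, vecMulVec_apply, hatm,
        Fin.sum_univ_three, Matrix.of_apply, Matrix.cons_val', Matrix.cons_val_zero,
        Matrix.cons_val_one, Matrix.cons_val_two, Matrix.head_cons, Matrix.tail_cons,
        Matrix.empty_val', Matrix.cons_val_fin_one]
      norm_num [Matrix.cons_val_zero, Matrix.cons_val_one, Fin.ext_iff]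
      ring
    have hexp1 : z ⬝ᵥ (L1mat x).mulVec z =
        c * (∑ i, z i ^ 2) + ((1 - c) / norm2 x ^ 2) * (∑ i, x i * z i) ^ 2 := by
      simp only [L1mat, if_neg hx0, dotProduct, Matrix.mulVec, Matrix.add_apply,
        Matrix.smul_apply, Matrix.one_apply, vecMulVec_apply,
        Fin.sum_univ_three]
      norm_num [Matrix.cons_val_zero, Matrix.cons_val_one, Fin.ext_iff]
      ring
    refine ⟨hexp.trans hexp1.symm, ?_⟩
    rw [hexp, hz2]
    have : 0 ≤ ((1 - c) / norm2 x ^ 2) * (∑ i, x i * z i) ^ 2 := by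
      apply mul_nonneg
      · apply div_nonneg (by linarith) (by positivity)
      · positivity
    linarith
end
end

section
/- Dissipation inequality for the signum protocol: let G be an undirected graph on n nodes with m edges and incidence matrix B (for an arbitrary orientation of the edges), let B̂ = B ⊗ I₃, and let x = (x₁,…,xₙ) ∈ ℝ^{3n} satisfy ‖xᵢ‖₂ < 2π for every i. Then for every sign-selection s ∈ ℝ^{3m} for B̂ᵀ x, one has xᵀ L_x B̂ s = xᵀ B̂ s ≥ 0; equivalently, xᵀ(−L_x B̂ s) ≤ 0. -/
open Matrix Real

noncomputable section

/-- `s` is a sign-selection for `z`: each component lies in [−1,1] and equals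
`sign (z ℓ)` whenever `z ℓ ≠ 0`. -/
def SignSel {k : Type*} (s z : k → ℝ) : Prop :=
  ∀ ℓ, s ℓ ∈ Set.Icc (-1 : ℝ) 1 ∧ (z ℓ ≠ 0 → s ℓ = Real.sign (z ℓ))

/-- Vector-valued (ℝ³-blocks) sign-selection, componentwise. -/
def SignSelV {m : ℕ} (s z : Fin m → Fin 3 → ℝ) : Prop :=
  ∀ e k, s e k ∈ Set.Icc (-1 : ℝ) 1 ∧ (z e k ≠ 0 → s e k = Real.sign (z e k))


lemma hat_orth (x v : Fin 3 → ℝ) : x ⬝ᵥ (hatm x).mulVec v = 0 := by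
  simp [hatm, mulVec, dotProduct, Fin.sum_univ_three]
  ring

lemma vmv_dot (x v : Fin 3 → ℝ) :
    x ⬝ᵥ (vecMulVec x x).mulVec v = (∑ i, x i ^ 2) * (x ⬝ᵥ v) := by
  simp [vecMulVec_apply, mulVec, dotProduct, Fin.sum_univ_three]
  ring

lemma xLx (x v : Fin 3 → ℝ) : x ⬝ᵥ (Lmat x).mulVec v = x ⬝ᵥ v := by
  by_cases h : x = 0
  · simp [Lmat, h, dotProduct]
  · have hS : (∑ i, x i ^ 2) ≠ 0 := by
      intro hS
      apply h
      funext i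
      have h2 := (Finset.sum_eq_zero_iff_of_nonneg (fun i _ => sq_nonneg (x i))).mp hS i (by simp)
      exact (pow_eq_zero_iff two_ne_zero).mp h2
    have hn2 : norm2 x ^ 2 = ∑ i, x i ^ 2 :=
      Real.sq_sqrt (Finset.sum_nonneg fun i _ => sq_nonneg _)
    rw [Lmat, if_neg h, hn2, Matrix.add_mulVec, Matrix.add_mulVec,
      Matrix.smul_mulVec, Matrix.smul_mulVec, Matrix.smul_mulVec,
      Matrix.one_mulVec, dotProduct_add, dotProduct_add,
      dotProduct_smul, dotProduct_smul, dotProduct_smul, vmv_dot, hat_orth,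
      smul_eq_mul, smul_eq_mul, smul_eq_mul]
    field_simp
    ring

/-- dissipation inequality for the signum protocol.
Here `te e`/`he e` are the tail/head of edge `e` (an arbitrary orientation of an
undirected graph), `B` is the incidence matrix, the `i`-th block of `B̂ s` is
`∑ e, B i e • s e`, and the `(e,k)` component of `B̂ᵀ x` is `∑ i, B i e * x i k`. -/
theorem dissipation_inequality {n m : ℕ}
    (te he : Fin m → Fin n) (hloop : ∀ e, te e ≠ he e)
    (B : Matrix (Fin n) (Fin m) ℝ)
    (hB : ∀ i e, B i e = if i = te e then 1 else if i = he e then -1 else 0)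
    (x : Fin n → Fin 3 → ℝ) (hx : ∀ i, norm2 (x i) < 2 * Real.pi)
    (s : Fin m → Fin 3 → ℝ)
    (hs : SignSelV s (fun e k => ∑ i, B i e * x i k)) :
    (∑ i, x i ⬝ᵥ (Lmat (x i)).mulVec (∑ e, B i e • s e))
        = ∑ i, x i ⬝ᵥ (∑ e, B i e • s e) ∧
    0 ≤ ∑ i, x i ⬝ᵥ (∑ e, B i e • s e) := by
  constructor
  · exact Finset.sum_congr rfl fun i _ => xLx (x i) _
  · have key : (∑ i, x i ⬝ᵥ (∑ e, B i e • s e))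
        = ∑ e, ∑ k, (∑ i, B i e * x i k) * s e k := by
      simp only [dotProduct, Finset.sum_apply, Pi.smul_apply, smul_eq_mul,
        Finset.mul_sum, Finset.sum_mul]
      have h1 : ∀ i : Fin n, (∑ k, ∑ e, x i k * (B i e * s e k))
          = ∑ e, ∑ k, B i e * x i k * s e k := by
        intro i
        rw [Finset.sum_comm]
        exact Finset.sum_congr rfl fun e _ => Finset.sum_congr rfl fun k _ => by ring
      rw [Finset.sum_congr rfl fun i _ => h1 i, Finset.sum_comm]
      exact Finset.sum_congr rfl fun e _ => Finset.sum_comm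
    rw [key]
    refine Finset.sum_nonneg fun e _ => Finset.sum_nonneg fun k _ => ?_
    by_cases hz : (∑ i, B i e * x i k) = 0
    · simp [hz]
    · rw [(hs e k).2 hz]
      rcases lt_trichotomy (∑ i, B i e * x i k) 0 with hlt | heq | hgt
      · rw [Real.sign_of_neg hlt]; nlinarith
      · exact absurd heq hz
      · rw [Real.sign_of_pos hgt]; nlinarith
end
end

section
/- Argmax boundary-flow lemma: let G be a connected undirected graph on n nodes with m edges and incidence matrix B (for an arbitrary orientation of the edges), let y ∈ ℝⁿ be a non-constant vector, and let α = {i : yᵢ = max_ℓ y_ℓ} be its set of maximizers. Then for every sign-selection s ∈ ℝ^{m} for Bᵀ y, one has Σ_{i∈α} (B s)ᵢ ≥ 1. -/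
open Matrix Real

noncomputable section

private lemma exists_boundary_edge {V : Type*} {G : SimpleGraph V} {P : V → Prop} :
    ∀ {a b : V}, G.Walk a b → P a → ¬P b → ∃ i j, G.Adj i j ∧ P i ∧ ¬P j := by
  intro a b w
  induction w with
  | nil => intro h1 h2; exact absurd h1 h2
  | @cons u v w h p ih =>
    intro ha hb
    by_cases hc : P v
    · exact ih hc hb
    · exact ⟨u, v, h, ha, hc⟩

/-- argmax boundary-flow lemma. `te e`/`he e` are the tail/head
of edge `e`, `B` is the incidence matrix, and the underlying undirected graph
is connected. For a non-constant `y` and any sign-selection `s` for `Bᵀ y`,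
the entries of `B s` summed over the argmax set of `y` are at least 1. -/
theorem argmax_boundary_flow {n m : ℕ}
    (te he : Fin m → Fin n) (hloop : ∀ e, te e ≠ he e)
    (hconn : (SimpleGraph.fromRel (fun i j => ∃ e, te e = i ∧ he e = j)).Connected)
    (B : Matrix (Fin n) (Fin m) ℝ)
    (hB : ∀ i e, B i e = if i = te e then 1 else if i = he e then -1 else 0)
    (y : Fin n → ℝ) (hy : ∃ i j, y i ≠ y j)
    (s : Fin m → ℝ) (hs : SignSel s (fun e => ∑ i, B i e * y i)) :
    1 ≤ ∑ i ∈ Finset.univ.filter (fun i => ∀ ℓ, y ℓ ≤ y i), B.mulVec s i := by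
  classical
  set α : Finset (Fin n) := Finset.univ.filter (fun i => ∀ ℓ, y ℓ ≤ y i) with hα
  have hmemα : ∀ i, i ∈ α ↔ ∀ ℓ, y ℓ ≤ y i := by
    intro i; simp [hα]
  -- decomposition of B entries
  have hBdec : ∀ i e, B i e = (if i = te e then (1:ℝ) else 0) + (if i = he e then -1 else 0) := by
    intro i e
    rw [hB]
    split_ifs with h1 h2
    · exact absurd (h1.symm.trans h2) (hloop e)
    · ring
    · ring
    · ring
  -- z e = y (te e) - y (he e)
  have hz : ∀ e, (∑ i, B i e * y i) = y (te e) - y (he e) := by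
    intro e
    have : ∀ i, B i e * y i
        = (if i = te e then y i else 0) + (if i = he e then -(y i) else 0) := by
      intro i
      rw [hBdec]
      split_ifs <;> ring
    rw [Finset.sum_congr rfl (fun i _ => this i), Finset.sum_add_distrib]
    simp [Finset.sum_ite_eq']
    ring
  -- swap sums
  have hswap : ∑ i ∈ α, B.mulVec s i
      = ∑ e, ((if te e ∈ α then (1:ℝ) else 0) - (if he e ∈ α then 1 else 0)) * s e := by
    have h1 : ∑ i ∈ α, B.mulVec s i = ∑ e, ∑ i ∈ α, B i e * s e := by
      rw [Finset.sum_comm]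
      rfl
    rw [h1]
    refine Finset.sum_congr rfl (fun e _ => ?_)
    have : ∀ i, B i e * s e
        = (if i = te e then s e else 0) + (if i = he e then -(s e) else 0) := by
      intro i
      rw [hBdec]
      split_ifs <;> ring
    rw [Finset.sum_congr rfl (fun i _ => this i), Finset.sum_add_distrib]
    simp [Finset.sum_ite_eq']
    split_ifs <;> ring
  set g : Fin m → ℝ :=
    fun e => ((if te e ∈ α then (1:ℝ) else 0) - (if he e ∈ α then 1 else 0)) * s e with hg
  -- crossing edges give exactly 1
  have hcross1 : ∀ e, te e ∈ α → he e ∉ α → g e = 1 := by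
    intro e h1 h2
    have hyt := (hmemα _).1 h1
    have hlt : y (he e) < y (te e) := by
      rcases not_forall.1 ((hmemα (he e)).not.1 h2) with ⟨ℓ, hℓ⟩
      exact lt_of_lt_of_le (not_le.1 hℓ) (hyt ℓ)
    have hzpos : (0:ℝ) < ∑ i, B i e * y i := by rw [hz]; linarith
    have hse := (hs e).2 (ne_of_gt hzpos)
    rw [hg]
    simp only [h1, h2, if_pos, if_neg]
    rw [hse, Real.sign_of_pos hzpos]
    norm_num
  have hcross2 : ∀ e, te e ∉ α → he e ∈ α → g e = 1 := by
    intro e h1 h2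
    have hyt := (hmemα _).1 h2
    have hlt : y (te e) < y (he e) := by
      rcases not_forall.1 ((hmemα (te e)).not.1 h1) with ⟨ℓ, hℓ⟩
      exact lt_of_lt_of_le (not_le.1 hℓ) (hyt ℓ)
    have hzneg : (∑ i, B i e * y i) < 0 := by rw [hz]; linarith
    have hse := (hs e).2 (ne_of_lt hzneg)
    rw [hg]
    simp only [h1, h2, if_pos, if_neg]
    rw [hse, Real.sign_of_neg hzneg]
    norm_num
  -- nonnegativity
  have hnonneg : ∀ e, 0 ≤ g e := by
    intro e
    by_cases h1 : te e ∈ α <;> by_cases h2 : he e ∈ α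
    · simp [hg, h1, h2]
    · linarith [hcross1 e h1 h2]
    · linarith [hcross2 e h1 h2]
    · simp [hg, h1, h2]
  -- existence of a crossing edge
  obtain ⟨i0, j0, hij⟩ := hy
  have hne : Nonempty (Fin n) := ⟨i0⟩
  obtain ⟨a, -, ha⟩ := Finset.exists_max_image Finset.univ y Finset.univ_nonempty
  have haα : a ∈ α := (hmemα a).2 (fun ℓ => ha ℓ (Finset.mem_univ ℓ))
  have hbex : ∃ b, b ∉ α := by
    rcases lt_or_gt_of_ne hij with h | h
    · exact ⟨i0, fun hc => absurd ((hmemα i0).1 hc j0) (not_le.2 h)⟩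
    · exact ⟨j0, fun hc => absurd ((hmemα j0).1 hc i0) (not_le.2 h)⟩
  obtain ⟨b, hbα⟩ := hbex
  obtain ⟨w⟩ := hconn.preconnected a b
  obtain ⟨i, j, hadj, hiα, hjα⟩ :=
    exists_boundary_edge (P := fun v => v ∈ α) w haα hbα
  rw [SimpleGraph.fromRel_adj] at hadj
  obtain ⟨-, ⟨e0, he1, he2⟩ | ⟨e0, he1, he2⟩⟩ := hadj
  · have hge : g e0 = 1 := hcross1 e0 (he1 ▸ hiα) (he2 ▸ hjα)
    calc (1:ℝ) = g e0 := hge.symm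
      _ ≤ ∑ e, g e := Finset.single_le_sum (fun e _ => hnonneg e) (Finset.mem_univ e0)
      _ = _ := (hswap).symm
  · have hge : g e0 = 1 := hcross2 e0 (he1 ▸ hjα) (he2 ▸ hiα)
    calc (1:ℝ) = g e0 := hge.symm
      _ ≤ ∑ e, g e := Finset.single_le_sum (fun e _ => hnonneg e) (Finset.mem_univ e0)
      _ = _ := (hswap).symm
end
end

section
/- Strong invariance of sublevel sets (Lemma on invariant sets): let G be a connected undirected graph on n nodes with m edges and incidence matrix B, B̂ = B ⊗ I₃, and let 0 < C < 4π². Suppose x : [0, ∞) → ℝ^{3n} is locally Lipschitz, Σ_{i=1}^{n} ‖xᵢ(0)‖₂² < C, and for almost every t ≥ 0 the derivative x′(t) exists and x′(t) = −L_{x(t)} B̂ s(t) for some sign-selection s(t) ∈ ℝ^{3m} for B̂ᵀ x(t). Then Σ_{i=1}^{n} ‖xᵢ(t)‖₂² < C for all t ≥ 0; in fact t ↦ Σᵢ ‖xᵢ(t)‖₂² is non-increasing. -/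
open Matrix Real

noncomputable section

open MeasureTheory Set in
private lemma antitone_aux {g : ℝ → ℝ} {a b K : ℝ} (hab : a ≤ b) (hK : 0 ≤ K)
    (hlip : ∀ t ∈ Icc a b, ∀ u ∈ Icc a b, |g u - g t| ≤ K * |u - t|)
    (hder : ∀ᵐ t ∂(volume : Measure ℝ), t ∈ Icc a b → ∃ g', HasDerivAt g g' t ∧ g' ≤ 0) :
    g b ≤ g a := by
  -- the "good" set where the derivative exists and is ≤ 0
  set D : Set ℝ := {t | ∃ g', HasDerivAt g g' t ∧ g' ≤ 0} with hD
  have hN : volume (Icc a b \ D) = 0 := by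
    refine measure_mono_null ?_ (ae_iff.1 hder)
    intro t ht
    simp only [mem_setOf_eq, Classical.not_imp]
    exact ⟨ht.1, ht.2⟩
  -- continuity of g on [a,b]
  have hgcont : ContinuousOn g (Icc a b) := by
    apply LipschitzOnWith.continuousOn (K := Real.toNNReal K)
    intro t ht u hu
    rw [edist_dist, edist_dist, Real.dist_eq, Real.dist_eq]
    calc (ENNReal.ofReal |g t - g u|) ≤ ENNReal.ofReal (K * |t - u|) :=
          ENNReal.ofReal_le_ofReal (hlip u hu t ht)
      _ = ENNReal.ofReal K * ENNReal.ofReal |t - u| :=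
          ENNReal.ofReal_mul hK
      _ = _ := by rw [ENNReal.ofReal]
  -- main estimate for every ε > 0
  have main : ∀ ε : ℝ, 0 < ε → g b - g a ≤ ε * (b - a) + 2 * K * ε := by
    intro ε hε
    obtain ⟨U, hNU, hUopen, hUsmall⟩ := Set.exists_isOpen_lt_of_lt (Icc a b \ D)
      (ENNReal.ofReal ε) (by rw [hN]; exact ENNReal.ofReal_pos.2 hε)
    set φ : ℝ → ℝ := fun t => (volume (U ∩ Ioc a t)).toReal with hφ
    have hfin : ∀ t, volume (U ∩ Ioc a t) ≠ ⊤ :=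
      fun t => ((measure_mono inter_subset_left).trans_lt
        (hUsmall.trans_le le_top)).ne
    have hφmono : ∀ {t u : ℝ}, t ≤ u → φ t ≤ φ u := by
      intro t u htu
      exact ENNReal.toReal_mono (hfin u)
        (measure_mono (inter_subset_inter_right _ (Ioc_subset_Ioc_right htu)))
    have hφle : ∀ {t u : ℝ}, t ≤ u → φ u ≤ φ t + (u - t) := by
      intro t u htu
      have hsub : U ∩ Ioc a u ⊆ (U ∩ Ioc a t) ∪ Ioc t u := by
        intro z hz
        rcases le_or_gt z t with h | h
        · exact Or.inl ⟨hz.1, hz.2.1, h⟩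
        · exact Or.inr ⟨h, hz.2.2⟩
      have := (measure_mono hsub).trans (measure_union_le (μ := volume) _ _)
      have h2 : volume (Ioc t u) = ENNReal.ofReal (u - t) := by
        rw [Real.volume_Ioc]
      rw [h2] at this
      calc φ u ≤ ((volume (U ∩ Ioc a t)) + ENNReal.ofReal (u - t)).toReal :=
            ENNReal.toReal_mono (by simp [hfin t]) this
        _ = φ t + (u - t) := by
            rw [ENNReal.toReal_add (hfin t) (by simp)]
            simp [hφ, ENNReal.toReal_ofReal (sub_nonneg.2 htu)]
    have hφadd : ∀ {t u : ℝ}, a ≤ t → t ≤ u → Ioc t u ⊆ U → φ t + (u - t) ≤ φ u := by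
      intro t u hat htu hIU
      have hsub : (U ∩ Ioc a t) ∪ Ioc t u ⊆ U ∩ Ioc a u := by
        intro z hz
        rcases hz with hz | hz
        · exact ⟨hz.1, hz.2.1, hz.2.2.trans htu⟩
        · exact ⟨hIU hz, lt_of_le_of_lt hat hz.1, hz.2⟩
      have hdisj : Disjoint (U ∩ Ioc a t) (Ioc t u) := by
        apply Disjoint.mono_left inter_subset_right
        rw [Set.disjoint_left]
        intro z hz hz'
        exact absurd hz.2 (not_le.2 hz'.1)
      have := ((measure_union (μ := volume) hdisj measurableSet_Ioc).symm.le).trans (measure_mono hsub)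
      rw [Real.volume_Ioc] at this
      calc φ t + (u - t)
          = ((volume (U ∩ Ioc a t)) + ENNReal.ofReal (u - t)).toReal := by
            rw [ENNReal.toReal_add (hfin t) (by simp)]
            simp [hφ, ENNReal.toReal_ofReal (sub_nonneg.2 htu)]
        _ ≤ φ u := ENNReal.toReal_mono (hfin u) this
    have hφcont : Continuous φ := by
      have : LipschitzWith 1 φ := by
        apply LipschitzWith.of_dist_le_mul
        intro t u
        rw [Real.dist_eq, Real.dist_eq, NNReal.coe_one, one_mul]
        rcases le_total t u with h | h
        · rw [abs_of_nonpos (by linarith [hφmono h]), abs_of_nonpos (by linarith)]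
          linarith [hφle h]
        · rw [abs_of_nonneg (by linarith [hφmono h]), abs_of_nonneg (by linarith)]
          linarith [hφle h]
      exact this.continuous
    have hφa : φ a = 0 := by simp [hφ]
    have hφb : φ b ≤ ε := by
      have : volume (U ∩ Ioc a b) ≤ ENNReal.ofReal ε :=
        (measure_mono inter_subset_left).trans hUsmall.le
      calc φ b ≤ (ENNReal.ofReal ε).toReal := ENNReal.toReal_mono (by simp) this
        _ = ε := ENNReal.toReal_ofReal hε.le
    -- real induction
    set s : Set ℝ := {t | g t - g a ≤ ε * (t - a) + 2 * K * φ t} with hs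
    have hsub : Icc a b ⊆ s := by
      apply IsClosed.Icc_subset_of_forall_exists_gt
      · have : ContinuousOn (fun t => g t - g a - (ε * (t - a) + 2 * K * φ t)) (Icc a b) := by
          apply ContinuousOn.sub (hgcont.sub continuousOn_const)
          exact (Continuous.add (by continuity) (continuous_const.mul hφcont)).continuousOn
        have h1 : s ∩ Icc a b
            = Icc a b ∩ (fun t => g t - g a - (ε * (t - a) + 2 * K * φ t)) ⁻¹' (Iic 0) := by
          ext t
          simp only [hs, mem_inter_iff, mem_setOf_eq, mem_preimage, mem_Iic, and_comm]
          constructor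
          · rintro ⟨h1, h2⟩; exact ⟨h1, by linarith⟩
          · rintro ⟨h1, h2⟩; exact ⟨h1, by linarith⟩
        rw [h1]
        exact this.preimage_isClosed_of_isClosed isClosed_Icc isClosed_Iic
      · simp [hs, hφa]
      · rintro t ⟨hts, hta, htb⟩ y hy
        by_cases htD : t ∈ D
        · obtain ⟨g', hd, hg'⟩ := htD
          have h1 : ∀ᶠ z in nhdsWithin t (Ioi t), slope g t z < ε :=
            (hd.hasDerivWithinAt (s := Ioi t)).limsup_slope_le'
              (notMem_Ioi.2 le_rfl) (lt_of_le_of_lt hg' hε)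
          have h2 : Ioc t (min y b) ∈ nhdsWithin t (Ioi t) :=
            Ioc_mem_nhdsGT_of_mem ⟨le_rfl, lt_min hy htb⟩
          obtain ⟨z, hz1, hz2⟩ := (h1.and (Filter.eventually_of_mem h2 (fun z hz => hz))).exists
          refine ⟨z, ?_, hz2.1, hz2.2.trans (min_le_left _ _)⟩
          have htz : t < z := hz2.1
          have : g z - g t < ε * (z - t) := by
            have h3 := hz1
            rw [slope_def_field] at h3
            have h4 := (div_lt_iff₀ (by linarith : (0:ℝ) < z - t)).1 h3
            linarith
          have := hts
          simp only [hs, mem_setOf_eq] at this ⊢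
          have hmono := hφmono htz.le
          nlinarith
        · -- t ∈ U
          have htU : t ∈ U := hNU ⟨⟨hta, htb.le⟩, htD⟩
          obtain ⟨δ, hδ, hball⟩ := Metric.isOpen_iff.1 hUopen t htU
          set u := min (t + δ / 2) (min y b) with hu
          have htu : t < u := by
            apply lt_min (by linarith) (lt_min hy htb)
          have hIU : Ioc t u ⊆ U := by
            intro z hz
            apply hball
            rw [Metric.mem_ball, Real.dist_eq, abs_of_pos (by linarith [hz.1])]
            have := hz.2.trans (min_le_left _ _)
            linarith
          refine ⟨u, ?_, htu, (min_le_right _ _).trans (min_le_left _ _)⟩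
          have hub : u ≤ b := (min_le_right _ _).trans (min_le_right _ _)
          have hgu : g u - g t ≤ K * (u - t) := by
            have := hlip t ⟨hta, htb.le⟩ u ⟨hta.trans htu.le, hub⟩
            calc g u - g t ≤ |g u - g t| := le_abs_self _
              _ ≤ K * |u - t| := this
              _ = K * (u - t) := by rw [abs_of_pos (by linarith)]
          have hadd := hφadd hta htu.le hIU
          have := hts
          simp only [hs, mem_setOf_eq] at this ⊢
          nlinarith
    have := hsub ⟨hab, le_rfl⟩
    simp only [hs, mem_setOf_eq] at this
    nlinarith [mul_le_mul_of_nonneg_left hφb (by linarith : (0:ℝ) ≤ 2 * K)]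
  -- conclude
  by_contra h
  push_neg at h
  have hc0 : 0 < g b - g a := by linarith
  have hpos : (0:ℝ) < (b - a) + 2 * K + 1 := by linarith
  set ε := (g b - g a) / ((b - a) + 2 * K + 1) with hε
  have hmain := main ε (div_pos hc0 hpos)
  have h3 : ε * ((b - a) + 2 * K) < g b - g a := by
    rw [hε, div_mul_eq_mul_div, div_lt_iff₀ hpos]
    nlinarith
  have h4 : ε * (b - a) + 2 * K * ε = ε * ((b - a) + 2 * K) := by ring
  linarith

private lemma col_Lmat (p : Fin 3 → ℝ) (j : Fin 3) : ∑ k, p k * Lmat p k j = p j := by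
  by_cases hp : p = 0
  · subst hp; simp [Lmat]
  · have hr : (0:ℝ) < ∑ i, p i ^ 2 := by
      have : ∃ k, p k ≠ 0 := by
        by_contra h
        push_neg at h
        exact hp (funext h)
      obtain ⟨k, hk⟩ := this
      have h1 : (0:ℝ) < p k ^ 2 := by positivity
      exact Finset.sum_pos' (fun i _ => sq_nonneg _) ⟨k, Finset.mem_univ k, h1⟩
    have hn : norm2 p ^ 2 = ∑ i, p i ^ 2 := Real.sq_sqrt (by positivity)
    have hr0 : norm2 p ^ 2 ≠ 0 := by rw [hn]; exact hr.ne'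
    have hhat : ∑ k, p k * hatm p k j = 0 := by
      fin_cases j <;>
        · simp [hatm, Fin.sum_univ_three]
          ring
    rw [Lmat, if_neg hp]
    have hexp : ∑ k, p k * (cfun (norm2 p) • (1 : Matrix (Fin 3) (Fin 3) ℝ)
        + ((1 - cfun (norm2 p)) / norm2 p ^ 2) • vecMulVec p p
        + (1 / 2 : ℝ) • hatm p) k j
        = cfun (norm2 p) * p j
          + ((1 - cfun (norm2 p)) / norm2 p ^ 2) * ((∑ k, p k ^ 2) * p j)
          + (1 / 2) * ∑ k, p k * hatm p k j := by
      simp only [Matrix.add_apply, Matrix.smul_apply, smul_eq_mul, mul_add,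
        Finset.sum_add_distrib, Matrix.vecMulVec_apply]
      congr 1
      · congr 1
        · simp only [Matrix.one_apply, mul_ite, mul_one, mul_zero]
          rw [Finset.sum_ite_eq' Finset.univ j (fun x => p x * cfun (norm2 p))]
          simp [mul_comm]
        · rw [Finset.sum_mul, Finset.mul_sum]
          apply Finset.sum_congr rfl; intro k _
          ring
      · rw [Finset.mul_sum]
        apply Finset.sum_congr rfl; intro k _
        ring
    rw [hexp, hhat, ← hn]
    have hn0 : norm2 p ≠ 0 := fun h => hr0 (by rw [h]; ring)
    field_simp
    ring

private lemma xLx_s14 (p w : Fin 3 → ℝ) :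
    ∑ k, p k * (Lmat p).mulVec w k = ∑ k, p k * w k := by
  have h1 : ∑ k, p k * (Lmat p).mulVec w k = ∑ j, (∑ k, p k * Lmat p k j) * w j := by
    simp only [Matrix.mulVec, dotProduct, Finset.mul_sum, Finset.sum_mul]
    rw [Finset.sum_comm]
    apply Finset.sum_congr rfl; intro k _
    apply Finset.sum_congr rfl; intro j _
    ring
  rw [h1]
  apply Finset.sum_congr rfl; intro j _
  rw [col_Lmat]


open MeasureTheory in
/-- strong invariance of sublevel sets.  A locally Lipschitz
Filippov solution of ẋ = −Lₓ B̂ sign(B̂ᵀ x) starting with ∑ᵢ ‖xᵢ(0)‖² < C < 4π²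
stays in that sublevel set, and t ↦ ∑ᵢ ‖xᵢ(t)‖² is non-increasing on [0,∞). -/
theorem sublevel_sets_strongly_invariant {n m : ℕ}
    (te he : Fin m → Fin n) (hloop : ∀ e, te e ≠ he e)
    (hconn : (SimpleGraph.fromRel (fun i j => ∃ e, te e = i ∧ he e = j)).Connected)
    (B : Matrix (Fin n) (Fin m) ℝ)
    (hB : ∀ i e, B i e = if i = te e then 1 else if i = he e then -1 else 0)
    (C : ℝ) (hC0 : 0 < C) (hC : C < 4 * Real.pi ^ 2)
    (x : ℝ → Fin n → Fin 3 → ℝ)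
    (hlip : ∀ a b : ℝ, 0 ≤ a → ∃ K : NNReal, LipschitzOnWith K x (Set.Icc a b))
    (h0 : ∑ i, norm2 (x 0 i) ^ 2 < C)
    (hdyn : ∀ᵐ t ∂(volume : Measure ℝ), 0 ≤ t →
      ∃ s : Fin m → Fin 3 → ℝ,
        SignSelV s (fun e k => ∑ i, B i e * x t i k) ∧
        HasDerivAt x (fun i => -(Lmat (x t i)).mulVec (∑ e, B i e • s e)) t) :
    (∀ t ≥ (0 : ℝ), ∑ i, norm2 (x t i) ^ 2 < C) ∧
    AntitoneOn (fun t => ∑ i, norm2 (x t i) ^ 2) (Set.Ici 0) := by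
  classical
  set V : ℝ → ℝ := fun t => ∑ i, ∑ k, x t i k ^ 2 with hV
  have hVeq : ∀ t, ∑ i, norm2 (x t i) ^ 2 = V t := by
    intro t
    apply Finset.sum_congr rfl
    intro i _
    rw [norm2, Real.sq_sqrt (Finset.sum_nonneg fun k _ => sq_nonneg _)]
  have hanti : AntitoneOn V (Set.Ici 0) := by
    intro a ha b hb hab
    obtain ⟨K, hK⟩ := hlip a b ha
    have hxc : ContinuousOn x (Set.Icc a b) := hK.continuousOn
    obtain ⟨M, hM⟩ := (isCompact_Icc (a := a) (b := b)).exists_bound_of_continuousOn hxc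
    have hcoord : ∀ t ∈ Set.Icc a b, ∀ i k, |x t i k| ≤ |M| := by
      intro t ht i k
      calc |x t i k| = ‖x t i k‖ := rfl
        _ ≤ ‖x t i‖ := norm_le_pi_norm (x t i) k
        _ ≤ ‖x t‖ := norm_le_pi_norm (x t) i
        _ ≤ M := hM t ht
        _ ≤ |M| := le_abs_self M
    have hclip : ∀ t ∈ Set.Icc a b, ∀ u ∈ Set.Icc a b, ∀ i k,
        |x u i k - x t i k| ≤ (K : ℝ) * |u - t| := by
      intro t ht u hu i k
      have h1 : dist (x u i k) (x t i k) ≤ dist (x u i) (x t i) :=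
        dist_le_pi_dist (x u i) (x t i) k
      have h2 : dist (x u i) (x t i) ≤ dist (x u) (x t) :=
        dist_le_pi_dist (x u) (x t) i
      have h3 : dist (x u) (x t) ≤ (K : ℝ) * dist u t :=
        (lipschitzOnWith_iff_dist_le_mul.1 hK) u hu t ht
      have : dist (x u i k) (x t i k) ≤ (K : ℝ) * dist u t := by linarith
      simpa [Real.dist_eq] using this
    apply antitone_aux hab (K := (n : ℝ) * 3 * (2 * |M|) * (K : ℝ)) (by positivity)
    · -- Lipschitz bound for V
      intro t ht u hu
      have h1 : |V u - V t| ≤ ∑ i, ∑ k, |x u i k ^ 2 - x t i k ^ 2| := by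
        have : V u - V t = ∑ i, ∑ k, (x u i k ^ 2 - x t i k ^ 2) := by
          rw [hV]
          rw [← Finset.sum_sub_distrib]
          apply Finset.sum_congr rfl
          intro i _
          rw [← Finset.sum_sub_distrib]
        rw [this]
        calc |∑ i, ∑ k, (x u i k ^ 2 - x t i k ^ 2)|
            ≤ ∑ i, |∑ k, (x u i k ^ 2 - x t i k ^ 2)| := Finset.abs_sum_le_sum_abs _ _
          _ ≤ ∑ i, ∑ k, |x u i k ^ 2 - x t i k ^ 2| := by
              apply Finset.sum_le_sum
              intro i _
              exact Finset.abs_sum_le_sum_abs _ _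
      have h2 : ∀ i k, |x u i k ^ 2 - x t i k ^ 2| ≤ 2 * |M| * ((K : ℝ) * |u - t|) := by
        intro i k
        have hfac : x u i k ^ 2 - x t i k ^ 2
            = (x u i k + x t i k) * (x u i k - x t i k) := by ring
        rw [hfac, abs_mul]
        apply mul_le_mul
        · calc |x u i k + x t i k| ≤ |x u i k| + |x t i k| := abs_add_le _ _
            _ ≤ 2 * |M| := by linarith [hcoord u hu i k, hcoord t ht i k]
        · exact hclip t ht u hu i k
        · exact abs_nonneg _
        · positivity
      calc |V u - V t| ≤ ∑ i, ∑ k, |x u i k ^ 2 - x t i k ^ 2| := h1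
        _ ≤ ∑ i : Fin n, ∑ k : Fin 3, 2 * |M| * ((K : ℝ) * |u - t|) := by
            apply Finset.sum_le_sum
            intro i _
            exact Finset.sum_le_sum fun k _ => h2 i k
        _ = (n : ℝ) * 3 * (2 * |M|) * (K : ℝ) * |u - t| := by
            simp [Finset.sum_const, Finset.card_univ]
            ring
    · -- a.e. derivative nonpositive
      filter_upwards [hdyn] with t hdt ht
      obtain ⟨s, hsel, hdx⟩ := hdt (ha.trans ht.1)
      refine ⟨∑ i, ∑ k, (2:ℝ) * x t i k *
        (-(Lmat (x t i)).mulVec (∑ e, B i e • s e)) k, ?_, ?_⟩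
      · apply HasDerivAt.fun_sum
        intro i _
        apply HasDerivAt.fun_sum
        intro k _
        have h := (hasDerivAt_pi.1 (hasDerivAt_pi.1 hdx i) k).fun_pow 2
        exact h.congr_deriv (by norm_num)
      · have hterm : ∀ (e : Fin m) (k : Fin 3),
            0 ≤ (∑ i, B i e * x t i k) * s e k := by
          intro e k
          by_cases hz : (∑ i, B i e * x t i k) = 0
          · simp [hz]
          · rw [(hsel e k).2 hz]
            rcases lt_or_gt_of_ne hz with h | h
            · rw [Real.sign_of_neg h]
              nlinarith
            · rw [Real.sign_of_pos h]
              nlinarith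
        have hrw : ∑ i, ∑ k, (2:ℝ) * x t i k *
            (-(Lmat (x t i)).mulVec (∑ e, B i e • s e)) k
            = -2 * ∑ e, ∑ k, (∑ i, B i e * x t i k) * s e k := by
          have step1 : ∀ i : Fin n, ∑ k, (2:ℝ) * x t i k *
              (-(Lmat (x t i)).mulVec (∑ e, B i e • s e)) k
              = -2 * ∑ k, x t i k * (∑ e, B i e * s e k) := by
            intro i
            have e1 : ∑ k, (2:ℝ) * x t i k *
                (-(Lmat (x t i)).mulVec (∑ e, B i e • s e)) k
                = -2 * ∑ k, x t i k *
                  ((Lmat (x t i)).mulVec (fun k => ∑ e, B i e * s e k)) k := by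
              rw [Finset.mul_sum]
              apply Finset.sum_congr rfl
              intro k _
              have harg : (∑ e, B i e • s e) = (fun k => ∑ e, B i e * s e k) := by
                funext k'
                simp [Finset.sum_apply]
              rw [harg]
              simp only [Pi.neg_apply]
              ring
            rw [e1, xLx_s14 (x t i) (fun k => ∑ e, B i e * s e k)]
          calc ∑ i, ∑ k, (2:ℝ) * x t i k *
              (-(Lmat (x t i)).mulVec (∑ e, B i e • s e)) k
              = ∑ i : Fin n, (-2 * ∑ k, x t i k * (∑ e, B i e * s e k)) := by
                exact Finset.sum_congr rfl fun i _ => step1 i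
            _ = -2 * ∑ i, ∑ k, ∑ e, B i e * x t i k * s e k := by
                rw [Finset.mul_sum]
                apply Finset.sum_congr rfl
                intro i _
                congr 1
                apply Finset.sum_congr rfl
                intro k _
                rw [Finset.mul_sum]
                apply Finset.sum_congr rfl
                intro e _
                ring
            _ = -2 * ∑ e, ∑ k, (∑ i, B i e * x t i k) * s e k := by
                congr 1
                rw [show (∑ i : Fin n, ∑ k : Fin 3, ∑ e : Fin m, B i e * x t i k * s e k)
                    = ∑ i : Fin n, ∑ e : Fin m, ∑ k : Fin 3, B i e * x t i k * s e k from
                  Finset.sum_congr rfl fun i _ => Finset.sum_comm]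
                rw [Finset.sum_comm]
                apply Finset.sum_congr rfl
                intro e _
                rw [Finset.sum_comm]
                apply Finset.sum_congr rfl
                intro k _
                rw [Finset.sum_mul]
        rw [hrw]
        have hS : 0 ≤ ∑ e, ∑ k, (∑ i, B i e * x t i k) * s e k :=
          Finset.sum_nonneg fun e _ => Finset.sum_nonneg fun k _ => hterm e k
        linarith
  constructor
  · intro t ht
    calc ∑ i, norm2 (x t i) ^ 2 = V t := hVeq t
      _ ≤ V 0 := hanti (Set.self_mem_Ici) ht ht
      _ < C := by rw [← hVeq 0]; exact h0
  · intro a ha b hb hab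
    simp only
    rw [hVeq b, hVeq a]
    exact hanti ha hb hab
end
end
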